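/- Assume hypotheses (H1) and (H2), and assume Γ* > 0. Then the connected components X_□ and X_⊞ of X** are disjoint (hence disconnected in X**), and they admit the characterizations X_□ = {η ∈ X : Φ(η,□) < Φ(η,⊞) = Γ*} and X_⊞ = {η ∈ X : Φ(η,⊞) < Φ(η,□) = Γ*}. -/

import Mathlib

open scoped Classical

variable {X : Type*}

/-- `ω` (restricted to 0,…,L) is a path of allowed moves from `a` to `b`. -/
def IsPathW (rel : X → X → Prop) (a b : X) (L : ℕ) (ω : ℕ → X) : Prop :=
  ω 0 = a ∧ ω L = b ∧ ∀ i < L, rel (ω i) (ω (i + 1))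

/-- The maximal energy along the path `ω = (ω 0, …, ω L)`. -/
noncomputable def pathMax (H : X → ℝ) (L : ℕ) (ω : ℕ → X) : ℝ :=
  (Finset.range (L + 1)).sup' Finset.nonempty_range_add_one fun i => H (ω i)

/-- Communication height Φ(a,b) between two configurations. -/
noncomputable def commH (rel : X → X → Prop) (H : X → ℝ) (a b : X) : ℝ :=
  sInf { m : ℝ | ∃ L ω, IsPathW rel a b L ω ∧ m = pathMax H L ω }

/-- Communication height Φ(A,B) between two sets of configurations. -/
noncomputable def commHS (rel : X → X → Prop) (H : X → ℝ) (A B : Set X) : ℝ :=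
  sInf { m : ℝ | ∃ a ∈ A, ∃ b ∈ B, m = commH rel H a b }

/-- The graph (X,∼) is connected. -/
def ConnGraph (rel : X → X → Prop) : Prop :=
  ∀ a b : X, ∃ L ω, IsPathW rel a b L ω

/-- `a` and `b` are connected by a path staying inside `S`. -/
def connIn (rel : X → X → Prop) (S : Set X) (a b : X) : Prop :=
  ∃ L ω, IsPathW rel a b L ω ∧ ∀ i ≤ L, ω i ∈ S

/-- Γ* = Φ(□,⊞) − H(□). -/
noncomputable def gammaStar (rel : X → X → Prop) (H : X → ℝ) (a b : X) : ℝ :=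
  commH rel H a b - H a

/-- X** = {η : H(η) < Γ*}. -/
noncomputable def Xss (rel : X → X → Prop) (H : X → ℝ) (a b : X) : Set X :=
  {η : X | H η < gammaStar rel H a b}

/-- The connected component of X** containing `root`. -/
noncomputable def compOf (rel : X → X → Prop) (H : X → ℝ) (a b root : X) : Set X :=
  {η : X | connIn rel (Xss rel H a b) root η}

set_option linter.unusedSectionVars false

section Aux

variable (rel : X → X → Prop) (H : X → ℝ)

lemma le_pathMax (L : ℕ) (ω : ℕ → X) {i : ℕ} (hi : i ≤ L) : H (ω i) ≤ pathMax H L ω := by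
  unfold pathMax
  exact Finset.le_sup' (fun j => H (ω j)) (Finset.mem_range.mpr (Nat.lt_succ_of_le hi))

lemma pathMax_eq_H (L : ℕ) (ω : ℕ → X) : ∃ i ≤ L, pathMax H L ω = H (ω i) := by
  obtain ⟨i, hi, h⟩ := Finset.exists_mem_eq_sup' (Finset.nonempty_range_add_one (n := L))
    (fun i => H (ω i))
  exact ⟨i, Nat.lt_succ_iff.mp (Finset.mem_range.mp hi), h⟩

lemma pathSet_finite [Fintype X] (a b : X) :
    {m : ℝ | ∃ L ω, IsPathW rel a b L ω ∧ m = pathMax H L ω}.Finite := by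
  apply (Set.finite_range H).subset
  rintro m ⟨L, ω, hω, rfl⟩
  obtain ⟨i, _, h⟩ := pathMax_eq_H H L ω
  exact ⟨ω i, h.symm⟩

variable [Fintype X]

lemma commH_le {a b : X} {L : ℕ} {ω : ℕ → X} (h : IsPathW rel a b L ω) :
    commH rel H a b ≤ pathMax H L ω :=
  csInf_le (pathSet_finite rel H a b).bddBelow ⟨L, ω, h, rfl⟩

lemma commH_exists (hconn : ConnGraph rel) (a b : X) :
    ∃ L ω, IsPathW rel a b L ω ∧ commH rel H a b = pathMax H L ω := by
  have hne : {m : ℝ | ∃ L ω, IsPathW rel a b L ω ∧ m = pathMax H L ω}.Nonempty := by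
    obtain ⟨L, ω, h⟩ := hconn a b
    exact ⟨_, L, ω, h, rfl⟩
  exact hne.csInf_mem (pathSet_finite rel H a b)

lemma path_reverse {a b : X} (hsymm : Symmetric rel) {L : ℕ} {ω : ℕ → X}
    (h : IsPathW rel a b L ω) :
    IsPathW rel b a L (fun i => ω (L - i)) ∧ pathMax H L (fun i => ω (L - i)) = pathMax H L ω := by
  obtain ⟨h0, hL, hrel⟩ := h
  constructor
  · refine ⟨by simpa using hL, by simpa using h0, ?_⟩
    intro i hi
    have h1 : L - (i + 1) < L := by omega
    have h2 : L - (i + 1) + 1 = L - i := by omega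
    have := hrel (L - (i + 1)) h1
    rw [h2] at this
    exact hsymm this
  · apply le_antisymm
    · apply Finset.sup'_le
      intro i hi
      have hi' : i ≤ L := Nat.lt_succ_iff.mp (Finset.mem_range.mp hi)
      exact le_pathMax H L ω (by omega)
    · apply Finset.sup'_le
      intro i hi
      have hi' : i ≤ L := Nat.lt_succ_iff.mp (Finset.mem_range.mp hi)
      have : H (ω i) = H (ω (L - (L - i))) := by rw [Nat.sub_sub_self hi']
      rw [this]
      exact le_pathMax H L (fun j => ω (L - j)) (i := L - i) (by omega)

lemma commH_symm (hsymm : Symmetric rel) (hconn : ConnGraph rel) (a b : X) :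
    commH rel H a b = commH rel H b a := by
  have key : ∀ x y : X, commH rel H x y ≤ commH rel H y x := by
    intro x y
    obtain ⟨L, ω, hω, heq⟩ := commH_exists rel H hconn y x
    obtain ⟨hrev, hmax⟩ := path_reverse rel H hsymm hω
    calc commH rel H x y ≤ pathMax H L (fun i => ω (L - i)) := commH_le rel H hrev
    _ = pathMax H L ω := hmax
    _ = commH rel H y x := heq.symm
  exact le_antisymm (key a b) (key b a)

lemma path_concat {a b c : X} {L M : ℕ} {ω τ : ℕ → X}
    (h1 : IsPathW rel a b L ω) (h2 : IsPathW rel b c M τ) :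
    IsPathW rel a c (L + M) (fun i => if i ≤ L then ω i else τ (i - L)) ∧
    pathMax H (L + M) (fun i => if i ≤ L then ω i else τ (i - L))
      ≤ max (pathMax H L ω) (pathMax H M τ) := by
  obtain ⟨h10, h1L, h1rel⟩ := h1
  obtain ⟨h20, h2L, h2rel⟩ := h2
  constructor
  · refine ⟨by simpa using h10, ?_, ?_⟩
    · by_cases hM : M = 0
      · subst hM; simpa using h1L.trans (h20.symm.trans h2L)
      · have : ¬ (L + M ≤ L) := by omega
        simp only [this, if_false]
        simpa using h2L
    · intro i hi
      by_cases hil : i + 1 ≤ L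
      · have : i ≤ L := by omega
        simp only [this, hil, if_true]
        exact h1rel i (by omega)
      · by_cases hie : i ≤ L
        · have hiL : i = L := by omega
          simp only [hie, hil, if_true, if_false]
          have h1' : i + 1 - L = 1 := by omega
          rw [h1', hiL, h1L, ← h20]
          exact h2rel 0 (by omega)
        · simp only [hie, hil, if_false]
          have : i + 1 - L = (i - L) + 1 := by omega
          rw [this]
          exact h2rel (i - L) (by omega)
  · apply Finset.sup'_le
    intro i hi
    have hi' : i ≤ L + M := Nat.lt_succ_iff.mp (Finset.mem_range.mp hi)
    by_cases hie : i ≤ L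
    · simp only [hie, if_true]
      exact le_trans (le_pathMax H L ω hie) (le_max_left _ _)
    · simp only [hie, if_false]
      exact le_trans (le_pathMax H M τ (i := i - L) (by omega)) (le_max_right _ _)

lemma commH_triangle (hconn : ConnGraph rel) (a b c : X) :
    commH rel H a c ≤ max (commH rel H a b) (commH rel H b c) := by
  obtain ⟨L, ω, hω, heq1⟩ := commH_exists rel H hconn a b
  obtain ⟨M, τ, hτ, heq2⟩ := commH_exists rel H hconn b c
  obtain ⟨hp, hb⟩ := path_concat rel H hω hτ
  calc commH rel H a c ≤ _ := commH_le rel H hp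
  _ ≤ max (pathMax H L ω) (pathMax H M τ) := hb
  _ = _ := by rw [heq1, heq2]


lemma mem_comp_iff [Fintype X] (hconn : ConnGraph rel) (sq bx root η : X) :
    η ∈ compOf rel H sq bx root ↔ commH rel H root η < gammaStar rel H sq bx := by
  constructor
  · rintro ⟨L, ω, hω, hin⟩
    obtain ⟨i, hi, hmax⟩ := pathMax_eq_H H L ω
    calc commH rel H root η ≤ pathMax H L ω := commH_le rel H hω
    _ = H (ω i) := hmax
    _ < _ := hin i hi
  · intro h
    obtain ⟨L, ω, hω, heq⟩ := commH_exists rel H hconn root η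
    exact ⟨L, ω, hω, fun i hi => lt_of_le_of_lt
      ((le_pathMax H L ω hi).trans_eq heq.symm) h⟩

end Aux

/-- under (H1)–(H2) and Γ* > 0, the components X_□ and X_⊞ of X**
are disjoint and X_□ = {η : Φ(η,□) < Φ(η,⊞) = Γ*},
X_⊞ = {η : Φ(η,⊞) < Φ(η,□) = Γ*}. -/
theorem stmt_14 [Fintype X] (rel : X → X → Prop) (H : X → ℝ)
    (hsymm : Symmetric rel) (hconn : ConnGraph rel)
    (sq bx : X) (hne : sq ≠ bx) (Hsq : H sq = 0)
    -- (H1): X_stab = {⊞}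
    (hH1 : {η : X | ∀ ξ, H η ≤ H ξ} = {bx})
    -- (H2): ∃ V* < Γ* with V_η ≤ V* for all η ∉ {□,⊞}
    (hH2 : ∃ Vs : ℝ, Vs < gammaStar rel H sq bx ∧
      ∀ η : X, η ≠ sq → η ≠ bx →
        ({ξ : X | H ξ < H η}).Nonempty ∧
        commHS rel H {η} {ξ : X | H ξ < H η} - H η ≤ Vs)
    (hΓ : 0 < gammaStar rel H sq bx) :
    Disjoint (compOf rel H sq bx sq) (compOf rel H sq bx bx) ∧
    compOf rel H sq bx sq
      = {η : X | commH rel H η sq < commH rel H η bx ∧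
          commH rel H η bx = gammaStar rel H sq bx} ∧
    compOf rel H sq bx bx
      = {η : X | commH rel H η bx < commH rel H η sq ∧
          commH rel H η sq = gammaStar rel H sq bx} := by
  classical
  have hΦ : commH rel H sq bx = gammaStar rel H sq bx := by
    rw [gammaStar, Hsq, sub_zero]
  set Γ := gammaStar rel H sq bx with hΓdef
  have hmem : ∀ root η : X, η ∈ compOf rel H sq bx root ↔ commH rel H root η < Γ :=
    fun root η => mem_comp_iff rel H hconn sq bx root η
  have hS : ∀ a b : X, commH rel H a b = commH rel H b a :=
    fun a b => commH_symm rel H hsymm hconn a b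
  have htri : ∀ a b c : X, commH rel H a c ≤ max (commH rel H a b) (commH rel H b c) :=
    fun a b c => commH_triangle rel H hconn a b c
  refine ⟨?_, ?_, ?_⟩
  · rw [Set.disjoint_left]
    intro η h1 h2
    have e1 : commH rel H sq η < Γ := (hmem sq η).1 h1
    have e2 : commH rel H η bx < Γ := by rw [hS η bx]; exact (hmem bx η).1 h2
    have hle : Γ ≤ max (commH rel H sq η) (commH rel H η bx) := by
      rw [← hΦ]; exact htri sq η bx
    exact absurd hle (not_le.mpr (max_lt e1 e2))
  · ext η
    simp only [Set.mem_setOf_eq]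
    constructor
    · intro h
      have e1 : commH rel H η sq < Γ := by rw [hS η sq]; exact (hmem sq η).1 h
      have hup : commH rel H η bx ≤ Γ :=
        le_trans (htri η sq bx) (max_le e1.le hΦ.le)
      have hlo : Γ ≤ commH rel H η bx := by
        by_contra hc
        push_neg at hc
        have hle : Γ ≤ max (commH rel H sq η) (commH rel H η bx) := by
          rw [← hΦ]; exact htri sq η bx
        exact absurd hle (not_le.mpr (max_lt (by rw [← hS η sq]; exact e1) hc))
      have heq : commH rel H η bx = Γ := le_antisymm hup hlo
      exact ⟨heq ▸ e1, heq⟩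
    · rintro ⟨h1, h2⟩
      exact (hmem sq η).2 (by rw [hS sq η]; rw [h2] at h1; exact h1)
  · ext η
    simp only [Set.mem_setOf_eq]
    constructor
    · intro h
      have e1 : commH rel H η bx < Γ := by rw [hS η bx]; exact (hmem bx η).1 h
      have hup : commH rel H η sq ≤ Γ := by
        refine le_trans (htri η bx sq) (max_le e1.le ?_)
        rw [hS bx sq]; exact hΦ.le
      have hlo : Γ ≤ commH rel H η sq := by
        by_contra hc
        push_neg at hc
        have hle : Γ ≤ max (commH rel H sq η) (commH rel H η bx) := by
          rw [← hΦ]; exact htri sq η bx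
        exact absurd hle (not_le.mpr (max_lt (by rw [hS sq η]; exact hc) e1))
      have heq : commH rel H η sq = Γ := le_antisymm hup hlo
      exact ⟨heq ▸ e1, heq⟩
    · rintro ⟨h1, h2⟩
      exact (hmem bx η).2 (by rw [hS bx η]; rw [h2] at h1; exact h1)
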